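/- Energy of a history state with valid input: In the setting of the Kitaev Hamiltonian H = H_i + H_p + H_o above, let ξ ∈ W be a unit vector with P_j ξ = 0 for all j ∈ A_in, and let ψ_ξ = (T+1)^{−1/2} Σ_{t=0}^T |t⟩ ⊗ U_t ⋯ U_1 ξ be its history state (a unit vector). Then ⟨ψ_ξ, H ψ_ξ⟩ = (1/(T+1)) Σ_{j ∈ A_out} ‖P_j (U_T ⋯ U_1 ξ)‖²; that is, the energy of the history state equals the rejection weight of the computation divided by T+1. -/

import Mathlib

open scoped BigOperators

noncomputable section

/-- The `N`-qubit Hilbert space `W = ⨂_{j=1}^N ℂ²`, realized as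
`ℓ²`-functions on the set of computational basis configurations. -/
abbrev QubitSpace (N : ℕ) := EuclideanSpace ℂ (Fin N → Fin 2)

/-- The orthogonal projector onto `|1⟩` on qubit `j` (tensored with the identity on
the remaining qubits). -/
def qubitOneProj (N : ℕ) (j : Fin N) : QubitSpace N →ₗ[ℂ] QubitSpace N where
  toFun ψ := WithLp.toLp 2 (fun σ => if σ j = 1 then ψ σ else 0)
  map_add' ψ χ := by
    ext σ
    by_cases h : σ j = 1 <;> simp [h]
  map_smul' a ψ := by
    ext σ
    by_cases h : σ j = 1 <;> simp [h]

/-- `histFun T U t` is the composite `U_t ∘ U_{t-1} ∘ ⋯ ∘ U_1` of the first `t`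
circuit unitaries (the empty composite for `t = 0` being the identity). -/
def histFun {W : Type*} [NormedAddCommGroup W] [InnerProductSpace ℂ W]
    (T : ℕ) (U : Fin T → (W ≃ₗᵢ[ℂ] W)) : ℕ → W → W
  | 0 => id
  | n + 1 => if h : n < T then (fun w => U ⟨n, h⟩ (histFun T U n w)) else histFun T U n

/-- Feynman–Kitaev propagation Hamiltonian
`H_p = (1/2) ∑_{t=0}^{T-1} [(|t⟩⟨t| + |t+1⟩⟨t+1|) ⊗ 1 - |t+1⟩⟨t| ⊗ U_{t+1} - |t⟩⟨t+1| ⊗ U_{t+1}†]`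
acting on `ℂ^{T+1} ⊗ W`, realized as the space of functions `Fin (T+1) → W`. -/
def propHam {W : Type*} [NormedAddCommGroup W] [InnerProductSpace ℂ W]
    (T : ℕ) (U : Fin T → (W ≃ₗᵢ[ℂ] W)) :
    ((Fin (T + 1) → W) →ₗ[ℂ] (Fin (T + 1) → W)) :=
  (2 : ℂ)⁻¹ • ∑ t : Fin T,
    ((LinearMap.single ℂ (fun _ : Fin (T + 1) => W) t.castSucc) ∘ₗ
        ((LinearMap.proj t.castSucc : (∀ _ : Fin (T + 1), W) →ₗ[ℂ] W) -
          ((U t).symm.toLinearEquiv.toLinearMap ∘ₗ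
            (LinearMap.proj t.succ : (∀ _ : Fin (T + 1), W) →ₗ[ℂ] W))) +
      (LinearMap.single ℂ (fun _ : Fin (T + 1) => W) t.succ) ∘ₗ
        ((LinearMap.proj t.succ : (∀ _ : Fin (T + 1), W) →ₗ[ℂ] W) -
          ((U t).toLinearEquiv.toLinearMap ∘ₗ
            (LinearMap.proj t.castSucc : (∀ _ : Fin (T + 1), W) →ₗ[ℂ] W))))

/-- The input penalty `H_i = |0⟩⟨0| ⊗ ∑_{j ∈ A_in} P_j`. -/
def inputHam (T N : ℕ) (Ain : Finset (Fin N)) :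
    ((Fin (T + 1) → QubitSpace N) →ₗ[ℂ] (Fin (T + 1) → QubitSpace N)) :=
  (LinearMap.single ℂ (fun _ : Fin (T + 1) => QubitSpace N) 0) ∘ₗ
    (∑ j ∈ Ain, qubitOneProj N j) ∘ₗ
      (LinearMap.proj 0 : (∀ _ : Fin (T + 1), QubitSpace N) →ₗ[ℂ] QubitSpace N)

/-- The output penalty `H_o = |T⟩⟨T| ⊗ ∑_{j ∈ A_out} P_j`. -/
def outputHam (T N : ℕ) (Aout : Finset (Fin N)) :
    ((Fin (T + 1) → QubitSpace N) →ₗ[ℂ] (Fin (T + 1) → QubitSpace N)) :=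
  (LinearMap.single ℂ (fun _ : Fin (T + 1) => QubitSpace N) (Fin.last T)) ∘ₗ
    (∑ j ∈ Aout, qubitOneProj N j) ∘ₗ
      (LinearMap.proj (Fin.last T) :
        (∀ _ : Fin (T + 1), QubitSpace N) →ₗ[ℂ] QubitSpace N)

/-- The Kitaev Hamiltonian `H = H_i + H_p + H_o`. -/
def kitaevHam (T N : ℕ) (U : Fin T → (QubitSpace N ≃ₗᵢ[ℂ] QubitSpace N))
    (Ain Aout : Finset (Fin N)) :
    ((Fin (T + 1) → QubitSpace N) →ₗ[ℂ] (Fin (T + 1) → QubitSpace N)) :=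
  inputHam T N Ain + propHam T U + outputHam T N Aout

/-- **Energy of a history state with valid input.**  If `ξ` is a unit vector with
correctly initialized ancillae (`P_j ξ = 0` for `j ∈ A_in`), then the energy of its
history state `ψ_ξ = (T+1)^{-1/2} ∑_t |t⟩ ⊗ U_t ⋯ U_1 ξ` with respect to
`H = H_i + H_p + H_o` equals the rejection weight of the computation divided by
`T + 1`. -/
theorem history_state_energy (T N : ℕ)
    (U : Fin T → (QubitSpace N ≃ₗᵢ[ℂ] QubitSpace N))
    (Ain Aout : Finset (Fin N))
    (ξ : QubitSpace N) (hξ : ‖ξ‖ = 1)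
    (hin : ∀ j ∈ Ain, qubitOneProj N j ξ = 0) :
    (∑ t, (inner ℂ ((fun t : Fin (T + 1) =>
          ((Real.sqrt (T + 1) : ℂ))⁻¹ • histFun T U t.val ξ) t)
        ((kitaevHam T N U Ain Aout) (fun t : Fin (T + 1) =>
          ((Real.sqrt (T + 1) : ℂ))⁻¹ • histFun T U t.val ξ) t) : ℂ)) =
      ((((T : ℝ) + 1)⁻¹ *
        ∑ j ∈ Aout, ‖qubitOneProj N j (histFun T U T ξ)‖ ^ 2 : ℝ) : ℂ) := by
  set c : ℂ := ((Real.sqrt (T + 1) : ℂ))⁻¹ with hc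
  set ψ : Fin (T + 1) → QubitSpace N :=
    fun t => c • histFun T U t.val ξ with hψdef
  have hstep : ∀ t : Fin T, (U t) (histFun T U t.val ξ) = histFun T U (t.val + 1) ξ := by
    intro t
    simp [histFun, t.isLt]
  have hprop : propHam T U ψ = 0 := by
    unfold propHam
    simp only [LinearMap.smul_apply, LinearMap.sum_apply, LinearMap.add_apply,
      LinearMap.comp_apply, LinearMap.sub_apply, LinearMap.proj_apply]
    have hz : ∀ t : Fin T,
        (ψ t.castSucc - (U t).symm.toLinearEquiv.toLinearMap (ψ t.succ)) = 0 ∧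
        (ψ t.succ - (U t).toLinearEquiv.toLinearMap (ψ t.castSucc)) = 0 := by
      intro t
      have h1 : (ψ t.succ : QubitSpace N) = c • (U t) (histFun T U t.val ξ) := by
        simp [hψdef, Fin.val_succ, hstep t]
      constructor
      · have : (U t).symm.toLinearEquiv.toLinearMap (ψ t.succ) = ψ t.castSucc := by
          rw [h1]
          simp [hψdef, Fin.coe_castSucc]
        rw [this]; abel
      · have : (U t).toLinearEquiv.toLinearMap (ψ t.castSucc) = ψ t.succ := by
          rw [h1]
          simp [hψdef, Fin.coe_castSucc]
        rw [this]; abel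
    have : ∀ t : Fin T,
        (LinearMap.single ℂ (fun _ : Fin (T + 1) => QubitSpace N) t.castSucc)
          (ψ t.castSucc - (U t).symm.toLinearEquiv.toLinearMap (ψ t.succ)) +
        (LinearMap.single ℂ (fun _ : Fin (T + 1) => QubitSpace N) t.succ)
          (ψ t.succ - (U t).toLinearEquiv.toLinearMap (ψ t.castSucc)) = 0 := by
      intro t
      rw [(hz t).1, (hz t).2]
      simp
    rw [Finset.sum_congr rfl (fun t _ => this t)]
    simp
  have hinp : inputHam T N Ain ψ = 0 := by
    unfold inputHam
    have h0 : (∑ j ∈ Ain, qubitOneProj N j) (ψ 0) = 0 := by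
      have : (ψ 0 : QubitSpace N) = c • ξ := by simp [hψdef, histFun]
      rw [this]
      simp only [LinearMap.map_smul, LinearMap.coe_sum, Finset.sum_apply]
      rw [Finset.sum_congr rfl (fun j hj => hin j hj)]
      simp
    simp only [LinearMap.comp_apply, LinearMap.proj_apply, h0]
    simp
  have hham : ∀ t : Fin (T + 1), (kitaevHam T N U Ain Aout) ψ t =
      Pi.single (M := fun _ : Fin (T + 1) => QubitSpace N) (Fin.last T) ((∑ j ∈ Aout, qubitOneProj N j) (ψ (Fin.last T))) t := by
    intro t
    have : (kitaevHam T N U Ain Aout) ψ = outputHam T N Aout ψ := by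
      unfold kitaevHam
      rw [LinearMap.add_apply, LinearMap.add_apply, hinp, hprop]
      simp
    rw [this]
    unfold outputHam
    simp only [LinearMap.comp_apply, LinearMap.proj_apply, LinearMap.single_apply]
  have hinner : ∀ (x : QubitSpace N) (j : Fin N),
      (inner ℂ x (qubitOneProj N j x) : ℂ) = ((‖qubitOneProj N j x‖ : ℝ) : ℂ) ^ 2 := by
    intro x j
    have : (inner ℂ x (qubitOneProj N j x) : ℂ)
        = inner ℂ (qubitOneProj N j x) (qubitOneProj N j x) := by
      simp only [PiLp.inner_apply]
      apply Finset.sum_congr rfl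
      intro σ _
      by_cases h : σ j = 1 <;> simp [qubitOneProj, h]
    rw [this, inner_self_eq_norm_sq_to_K]
    norm_cast
  have hcc : (starRingEnd ℂ) c * c = (((T : ℝ) + 1)⁻¹ : ℝ) := by
    rw [hc]
    have h1 : (starRingEnd ℂ) ((Real.sqrt (T + 1) : ℂ)) = (Real.sqrt (T + 1) : ℂ) := by
      simp [Complex.conj_ofReal]
    rw [map_inv₀, h1, ← mul_inv]
    norm_cast
    rw [Real.mul_self_sqrt (by positivity : (0:ℝ) ≤ ((T+1:ℕ):ℝ))]
  calc (∑ t, (inner ℂ (ψ t) ((kitaevHam T N U Ain Aout) ψ t) : ℂ))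
      = ∑ t, (inner ℂ (ψ t)
          (Pi.single (M := fun _ : Fin (T + 1) => QubitSpace N) (Fin.last T) ((∑ j ∈ Aout, qubitOneProj N j) (ψ (Fin.last T))) t) : ℂ) := by
        apply Finset.sum_congr rfl
        intro t _
        rw [hham t]
    _ = (inner ℂ (ψ (Fin.last T)) ((∑ j ∈ Aout, qubitOneProj N j) (ψ (Fin.last T))) : ℂ) := by
        rw [Finset.sum_eq_single (Fin.last T)]
        · simp
        · intro b _ hb
          rw [Pi.single_eq_of_ne hb]
          simp
        · simp
    _ = ((((T : ℝ) + 1)⁻¹ *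
        ∑ j ∈ Aout, ‖qubitOneProj N j (histFun T U T ξ)‖ ^ 2 : ℝ) : ℂ) := by
        have hlast : (ψ (Fin.last T) : QubitSpace N) = c • histFun T U T ξ := by
          simp [hψdef]
        rw [hlast, LinearMap.map_smul, inner_smul_left, inner_smul_right, ← mul_assoc, hcc]
        simp only [LinearMap.coe_sum, Finset.sum_apply]
        rw [inner_sum]
        rw [Finset.sum_congr rfl (fun j _ => hinner (histFun T U T ξ) j)]
        push_cast
        ring

end
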